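/- Let T, n, p ∈ ℕ, Xᵗ ∈ ℝ^{n×p}, Yᵗ ∈ ℝⁿ for t = 1,…,T, M ∈ ℝ^{p×p}, and λ ≥ 0, μ ≥ 0, ε > 0, γ > 0. Then the MTW loss L(θ₊, θ₋, P₁, P₂, θ̄₊, θ̄₋) = Σ_{t=1}^T [ (1/(2n))‖Xᵗ(θ₊ᵗ − θ₋ᵗ) − Yᵗ‖₂² + (λ/T)·Σ_{i=1}^p (θ₊ᵢᵗ + θ₋ᵢᵗ) + (μ/T)·( G(P₁ᵗ, θ₊ᵗ, θ̄₊) + G(P₂ᵗ, θ₋ᵗ, θ̄₋) ) ], where G(P, θ₁, θ₂) = ⟨P, M⟩ + ε·Σ_{i,j} P_{ij}(log P_{ij} − 1) + γ·kl(P𝟙, θ₁) + γ·kl(Pᵀ𝟙, θ₂), is jointly convex in all of its variables on the domain where all entries of θ₊ᵗ, θ₋ᵗ ∈ (0,∞)^p, P₁ᵗ, P₂ᵗ ∈ (0,∞)^{p×p}, and θ̄₊, θ̄₋ ∈ (0,∞)^p are positive. -/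

import Mathlib

open scoped BigOperators

/-- Generalized Kullback–Leibler divergence on positive vectors:
`kl (x, y) = ∑ i, x i * log (x i / y i) + y i - x i`. -/
noncomputable def genKL {p : ℕ} (x y : Fin p → ℝ) : ℝ :=
  ∑ i, (x i * Real.log (x i / y i) + y i - x i)

/-- Unbalanced entropic OT functional:
`G (P, θ₁, θ₂) = ⟨P, M⟩ + ε ∑ P_{ij} (log P_{ij} - 1) + γ kl(P𝟙, θ₁) + γ kl(Pᵀ𝟙, θ₂)`. -/
noncomputable def unbalancedOT {p q : ℕ} (M : Matrix (Fin p) (Fin q) ℝ) (ε γ : ℝ)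
    (P : Matrix (Fin p) (Fin q) ℝ) (θ₁ : Fin p → ℝ) (θ₂ : Fin q → ℝ) : ℝ :=
  (∑ i, ∑ j, P i j * M i j)
    + ε * ∑ i, ∑ j, P i j * (Real.log (P i j) - 1)
    + γ * genKL (fun i => ∑ j, P i j) θ₁
    + γ * genKL (fun j => ∑ i, P i j) θ₂

/-- The MTW loss, as a function of
`(θ₊, θ₋, P₁, P₂, θ̄₊, θ̄₋)`:
`L = ∑ t, (1/(2n)) ‖Xᵗ(θ₊ᵗ - θ₋ᵗ) - Yᵗ‖₂² + (λ/T) ∑ i (θ₊ᵢᵗ + θ₋ᵢᵗ)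
      + (μ/T) (G(P₁ᵗ, θ₊ᵗ, θ̄₊) + G(P₂ᵗ, θ₋ᵗ, θ̄₋))`. -/
noncomputable def mtwLoss {T n p : ℕ} (X : Fin T → Matrix (Fin n) (Fin p) ℝ)
    (Y : Fin T → Fin n → ℝ) (M : Matrix (Fin p) (Fin p) ℝ) (lam μ ε γ : ℝ)
    (v : (Fin T → Fin p → ℝ) × (Fin T → Fin p → ℝ) ×
          (Fin T → Matrix (Fin p) (Fin p) ℝ) × (Fin T → Matrix (Fin p) (Fin p) ℝ) ×
          (Fin p → ℝ) × (Fin p → ℝ)) : ℝ :=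
  let θp := v.1; let θm := v.2.1; let P₁ := v.2.2.1; let P₂ := v.2.2.2.1
  let θbp := v.2.2.2.2.1; let θbm := v.2.2.2.2.2
  ∑ t, ((1 / (2 * (n : ℝ))) *
        ∑ i, ((X t).mulVec (fun j => θp t j - θm t j) i - Y t i) ^ 2
      + (lam / (T : ℝ)) * ∑ i, (θp t i + θm t i)
      + (μ / (T : ℝ)) *
          (unbalancedOT M ε γ (P₁ t) (θp t) θbp +
            unbalancedOT M ε γ (P₂ t) (θm t) θbm))

abbrev MTWV (T p : ℕ) := (Fin T → Fin p → ℝ) × (Fin T → Fin p → ℝ) ×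
    (Fin T → Matrix (Fin p) (Fin p) ℝ) × (Fin T → Matrix (Fin p) (Fin p) ℝ) ×
    (Fin p → ℝ) × (Fin p → ℝ)


section helpers
variable {E : Type*} [AddCommGroup E] [Module ℝ E] {s : Set E} {g h : E → ℝ}

/-- A function preserving affine combinations with weights summing to 1. -/
def AffComb (g : E → ℝ) : Prop :=
  ∀ ⦃x y : E⦄ ⦃a b : ℝ⦄, a + b = 1 → g (a • x + b • y) = a * g x + b * g y

theorem AffComb.convexOn (hg : AffComb g) (hs : Convex ℝ s) : ConvexOn ℝ s g :=
  ⟨hs, fun x _ y _ a b _ _ hab => by rw [smul_eq_mul, smul_eq_mul, hg hab]⟩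

theorem AffComb.add' (hg : AffComb g) (hh : AffComb h) : AffComb (fun v => g v + h v) :=
  fun x y a b hab => by simp only [hg hab, hh hab]; ring

theorem AffComb.sub' (hg : AffComb g) (hh : AffComb h) : AffComb (fun v => g v - h v) :=
  fun x y a b hab => by simp only [hg hab, hh hab]; ring

theorem affComb_const (c : ℝ) : AffComb (fun _ : E => c) :=
  fun x y a b hab => by rw [← add_mul, hab, one_mul]

theorem AffComb.const_mul (c : ℝ) (hg : AffComb g) : AffComb (fun v => c * g v) :=
  fun x y a b hab => by simp only [hg hab]; ring

theorem affComb_sum {ι : Type*} (t : Finset ι) (f : ι → E → ℝ)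
    (h : ∀ i ∈ t, AffComb (f i)) : AffComb (fun v => ∑ i ∈ t, f i v) :=
  fun x y a b hab => by
    rw [Finset.mul_sum, Finset.mul_sum, ← Finset.sum_add_distrib]
    exact Finset.sum_congr rfl fun i hi => h i hi hab

theorem AffComb.sq (hg : AffComb g) (hs : Convex ℝ s) :
    ConvexOn ℝ s (fun v => g v ^ 2) :=
  ⟨hs, fun x _ y _ a b ha hb hab => by
    simp only [smul_eq_mul, hg hab]
    nlinarith [sq_nonneg (g x - g y), mul_nonneg ha hb]⟩

theorem AffComb.mulLog (hg : AffComb g) (hs : Convex ℝ s) (hpos : ∀ v ∈ s, 0 < g v) :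
    ConvexOn ℝ s (fun v => g v * Real.log (g v)) :=
  ⟨hs, fun x hx y hy a b ha hb hab => by
    have := Real.convexOn_mul_log.2 (Set.mem_Ici.2 (hpos x hx).le)
      (Set.mem_Ici.2 (hpos y hy).le) ha hb hab
    simpa [smul_eq_mul, hg hab] using this⟩

theorem AffComb.entropy (hg : AffComb g) (hs : Convex ℝ s) (hpos : ∀ v ∈ s, 0 < g v) :
    ConvexOn ℝ s (fun v => g v * (Real.log (g v) - 1)) := by
  have h1 := hg.mulLog hs hpos
  have h2 : AffComb (fun v => -g v) := fun x y a b hab => by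
    simp only [hg hab]; ring
  have heq : (fun v => g v * (Real.log (g v) - 1)) =
      fun v => g v * Real.log (g v) + -g v := by funext v; ring
  rw [heq]
  exact h1.add (h2.convexOn hs)

/-- Joint convexity of `(u, s) ↦ u * log (u / s)` as a scalar inequality. -/
theorem kl_combo_le {u w s' t' a b : ℝ} (hu : 0 < u) (hw : 0 < w) (hs : 0 < s')
    (ht : 0 < t') (ha : 0 ≤ a) (hb : 0 ≤ b) (hab : a + b = 1) :
    (a * u + b * w) * Real.log ((a * u + b * w) / (a * s' + b * t')) ≤
      a * (u * Real.log (u / s')) + b * (w * Real.log (w / t')) := by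
  rcases ha.lt_or_eq with ha' | ha'
  · rcases hb.lt_or_eq with hb' | hb'
    · have hY : 0 < a * s' + b * t' := by positivity
      set α := a * s' / (a * s' + b * t') with hα
      set β := b * t' / (a * s' + b * t') with hβ
      have hαβ : α + β = 1 := by
        rw [hα, hβ, ← add_div, div_eq_one_iff_eq hY.ne']
      have hα0 : 0 ≤ α := by positivity
      have hβ0 : 0 ≤ β := by positivity
      have key := Real.convexOn_mul_log.2 (Set.mem_Ici.2 (le_of_lt (by positivity : (0:ℝ) < u / s')))
        (Set.mem_Ici.2 (le_of_lt (by positivity : (0:ℝ) < w / t'))) hα0 hβ0 hαβ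
      simp only [smul_eq_mul] at key
      have hid : α * (u / s') + β * (w / t') = (a * u + b * w) / (a * s' + b * t') := by
        rw [hα, hβ]; field_simp
      rw [hid] at key
      have key2 := mul_le_mul_of_nonneg_left key hY.le
      have lhs_eq : (a * s' + b * t') * ((a * u + b * w) / (a * s' + b * t') *
          Real.log ((a * u + b * w) / (a * s' + b * t'))) =
          (a * u + b * w) * Real.log ((a * u + b * w) / (a * s' + b * t')) := by
        field_simp
      have rhs_eq : (a * s' + b * t') * (α * (u / s' * Real.log (u / s')) +
          β * (w / t' * Real.log (w / t'))) =
          a * (u * Real.log (u / s')) + b * (w * Real.log (w / t')) := by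
        rw [hα, hβ]; field_simp
      rw [lhs_eq, rhs_eq] at key2
      exact key2
    · have h0 : b = 0 := hb'.symm
      have h1 : a = 1 := by linarith
      rw [h0, h1]; simp
  · have h0 : a = 0 := ha'.symm
    have h1 : b = 1 := by linarith
    rw [h0, h1]; simp

theorem AffComb.klTerm (hg : AffComb g) (hh : AffComb h) (hs : Convex ℝ s)
    (hgp : ∀ v ∈ s, 0 < g v) (hhp : ∀ v ∈ s, 0 < h v) :
    ConvexOn ℝ s (fun v => g v * Real.log (g v / h v)) :=
  ⟨hs, fun x hx y hy a b ha hb hab => by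
    simp only [smul_eq_mul, hg hab, hh hab]
    exact kl_combo_le (hgp x hx) (hgp y hy) (hhp x hx) (hhp y hy) ha hb hab⟩

theorem convexOn_finset_sum {ι : Type*} (t : Finset ι) (hs : Convex ℝ s) (f : ι → E → ℝ)
    (h : ∀ i ∈ t, ConvexOn ℝ s (f i)) : ConvexOn ℝ s (fun v => ∑ i ∈ t, f i v) := by
  classical
  induction t using Finset.induction_on with
  | empty => simpa using convexOn_const 0 hs
  | @insert a t hnot ih =>
    have heq : (fun v => ∑ i ∈ insert a t, f i v) = fun v => f a v + ∑ i ∈ t, f i v :=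
      funext fun v => Finset.sum_insert hnot
    rw [heq]
    exact (h a (Finset.mem_insert_self a t)).add (ih fun i hi => h i (Finset.mem_insert_of_mem hi))

theorem combo_pos {a b u w : ℝ} (ha : 0 ≤ a) (hb : 0 ≤ b) (hab : a + b = 1)
    (hu : 0 < u) (hw : 0 < w) : 0 < a * u + b * w := by
  rcases ha.lt_or_eq with h | h
  · exact add_pos_of_pos_of_nonneg (mul_pos h hu) (mul_nonneg hb hw.le)
  · have hb1 : b = 1 := by linarith
    simp [← h, hb1, hw]

theorem AffComb.mul_const (c : ℝ) (hg : AffComb g) : AffComb (fun v => g v * c) :=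
  fun x y a b hab => by simp only [hg hab]; ring

theorem convexOn_add_fun (hg : ConvexOn ℝ s g) (hh : ConvexOn ℝ s h) :
    ConvexOn ℝ s (fun v => g v + h v) := hg.add hh

theorem convexOn_mul_fun (c : ℝ) (hc : 0 ≤ c) (hg : ConvexOn ℝ s g) :
    ConvexOn ℝ s (fun v => c * g v) := by
  simpa only [smul_eq_mul] using hg.smul hc

end helpers

/-- The MTW loss is jointly convex in all of its variables
`(θ₊, θ₋, P₁, P₂, θ̄₊, θ̄₋)` on the domain where all entries are positive. -/
theorem mtwLoss_jointly_convex {T n p : ℕ} (X : Fin T → Matrix (Fin n) (Fin p) ℝ)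
    (Y : Fin T → Fin n → ℝ) (M : Matrix (Fin p) (Fin p) ℝ) (lam μ ε γ : ℝ)
    (hlam : 0 ≤ lam) (hμ : 0 ≤ μ) (hε : 0 < ε) (hγ : 0 < γ) :
    ConvexOn ℝ
      {v : (Fin T → Fin p → ℝ) × (Fin T → Fin p → ℝ) ×
            (Fin T → Matrix (Fin p) (Fin p) ℝ) × (Fin T → Matrix (Fin p) (Fin p) ℝ) ×
            (Fin p → ℝ) × (Fin p → ℝ) |
        (∀ t i, 0 < v.1 t i) ∧ (∀ t i, 0 < v.2.1 t i) ∧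
        (∀ t i j, 0 < v.2.2.1 t i j) ∧ (∀ t i j, 0 < v.2.2.2.1 t i j) ∧
        (∀ i, 0 < v.2.2.2.2.1 i) ∧ (∀ i, 0 < v.2.2.2.2.2 i)}
      (mtwLoss X Y M lam μ ε γ) := by
  classical
  -- coordinate affine-combination facts
  have aθp : ∀ t i, AffComb (fun v : MTWV T p => v.1 t i) := fun t i =>
    fun x y a b _ => by
      simp [Prod.fst_add, Prod.smul_fst, Prod.snd_add, Prod.smul_snd, Pi.add_apply,
        Pi.smul_apply, smul_eq_mul]
  have aθm : ∀ t i, AffComb (fun v : MTWV T p => v.2.1 t i) := fun t i =>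
    fun x y a b _ => by
      simp [Prod.fst_add, Prod.smul_fst, Prod.snd_add, Prod.smul_snd, Pi.add_apply,
        Pi.smul_apply, smul_eq_mul]
  have aP1 : ∀ t i j, AffComb (fun v : MTWV T p => v.2.2.1 t i j) := fun t i j =>
    fun x y a b _ => by
      simp [Prod.fst_add, Prod.smul_fst, Prod.snd_add, Prod.smul_snd, Pi.add_apply,
        Pi.smul_apply, Matrix.add_apply, Matrix.smul_apply, smul_eq_mul]
  have aP2 : ∀ t i j, AffComb (fun v : MTWV T p => v.2.2.2.1 t i j) := fun t i j =>
    fun x y a b _ => by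
      simp [Prod.fst_add, Prod.smul_fst, Prod.snd_add, Prod.smul_snd, Pi.add_apply,
        Pi.smul_apply, Matrix.add_apply, Matrix.smul_apply, smul_eq_mul]
  have abp : ∀ i, AffComb (fun v : MTWV T p => v.2.2.2.2.1 i) := fun i =>
    fun x y a b _ => by
      simp [Prod.fst_add, Prod.smul_fst, Prod.snd_add, Prod.smul_snd, Pi.add_apply,
        Pi.smul_apply, smul_eq_mul]
  have abm : ∀ i, AffComb (fun v : MTWV T p => v.2.2.2.2.2 i) := fun i =>
    fun x y a b _ => by
      simp [Prod.fst_add, Prod.smul_fst, Prod.snd_add, Prod.smul_snd, Pi.add_apply,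
        Pi.smul_apply, smul_eq_mul]
  -- the domain is convex
  have hS : Convex ℝ {v : MTWV T p |
      (∀ t i, 0 < v.1 t i) ∧ (∀ t i, 0 < v.2.1 t i) ∧
      (∀ t i j, 0 < v.2.2.1 t i j) ∧ (∀ t i j, 0 < v.2.2.2.1 t i j) ∧
      (∀ i, 0 < v.2.2.2.2.1 i) ∧ (∀ i, 0 < v.2.2.2.2.2 i)} := by
    intro x hx y hy a b ha hb hab
    obtain ⟨h1, h2, h3, h4, h5, h6⟩ := hx
    obtain ⟨k1, k2, k3, k4, k5, k6⟩ := hy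
    refine ⟨fun t i => ?_, fun t i => ?_, fun t i j => ?_, fun t i j => ?_,
      fun i => ?_, fun i => ?_⟩
    · simp only [Prod.fst_add, Prod.smul_fst, Prod.snd_add, Prod.smul_snd, Pi.add_apply,
        Pi.smul_apply, Matrix.add_apply, Matrix.smul_apply, smul_eq_mul]
      exact combo_pos ha hb hab (h1 t i) (k1 t i)
    · simp only [Prod.fst_add, Prod.smul_fst, Prod.snd_add, Prod.smul_snd, Pi.add_apply,
        Pi.smul_apply, Matrix.add_apply, Matrix.smul_apply, smul_eq_mul]
      exact combo_pos ha hb hab (h2 t i) (k2 t i)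
    · simp only [Prod.fst_add, Prod.smul_fst, Prod.snd_add, Prod.smul_snd, Pi.add_apply,
        Pi.smul_apply, Matrix.add_apply, Matrix.smul_apply, smul_eq_mul]
      exact combo_pos ha hb hab (h3 t i j) (k3 t i j)
    · simp only [Prod.fst_add, Prod.smul_fst, Prod.snd_add, Prod.smul_snd, Pi.add_apply,
        Pi.smul_apply, Matrix.add_apply, Matrix.smul_apply, smul_eq_mul]
      exact combo_pos ha hb hab (h4 t i j) (k4 t i j)
    · simp only [Prod.fst_add, Prod.smul_fst, Prod.snd_add, Prod.smul_snd, Pi.add_apply,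
        Pi.smul_apply, Matrix.add_apply, Matrix.smul_apply, smul_eq_mul]
      exact combo_pos ha hb hab (h5 i) (k5 i)
    · simp only [Prod.fst_add, Prod.smul_fst, Prod.snd_add, Prod.smul_snd, Pi.add_apply,
        Pi.smul_apply, Matrix.add_apply, Matrix.smul_apply, smul_eq_mul]
      exact combo_pos ha hb hab (h6 i) (k6 i)
  -- generic convexity of the unbalanced OT term
  have hG : ∀ (Pc : MTWV T p → Matrix (Fin p) (Fin p) ℝ) (θ1 θ2 : MTWV T p → Fin p → ℝ),
      (∀ i j, AffComb (fun v => Pc v i j)) → (∀ i, AffComb (fun v => θ1 v i)) →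
      (∀ i, AffComb (fun v => θ2 v i)) →
      (∀ v ∈ {v : MTWV T p |
      (∀ t i, 0 < v.1 t i) ∧ (∀ t i, 0 < v.2.1 t i) ∧
      (∀ t i j, 0 < v.2.2.1 t i j) ∧ (∀ t i j, 0 < v.2.2.2.1 t i j) ∧
      (∀ i, 0 < v.2.2.2.2.1 i) ∧ (∀ i, 0 < v.2.2.2.2.2 i)}, ∀ i j, 0 < Pc v i j) →
      (∀ v ∈ {v : MTWV T p |
      (∀ t i, 0 < v.1 t i) ∧ (∀ t i, 0 < v.2.1 t i) ∧
      (∀ t i j, 0 < v.2.2.1 t i j) ∧ (∀ t i j, 0 < v.2.2.2.1 t i j) ∧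
      (∀ i, 0 < v.2.2.2.2.1 i) ∧ (∀ i, 0 < v.2.2.2.2.2 i)}, ∀ i, 0 < θ1 v i) →
      (∀ v ∈ {v : MTWV T p |
      (∀ t i, 0 < v.1 t i) ∧ (∀ t i, 0 < v.2.1 t i) ∧
      (∀ t i j, 0 < v.2.2.1 t i j) ∧ (∀ t i j, 0 < v.2.2.2.1 t i j) ∧
      (∀ i, 0 < v.2.2.2.2.1 i) ∧ (∀ i, 0 < v.2.2.2.2.2 i)}, ∀ i, 0 < θ2 v i) →
      ConvexOn ℝ {v : MTWV T p |
      (∀ t i, 0 < v.1 t i) ∧ (∀ t i, 0 < v.2.1 t i) ∧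
      (∀ t i j, 0 < v.2.2.1 t i j) ∧ (∀ t i j, 0 < v.2.2.2.1 t i j) ∧
      (∀ i, 0 < v.2.2.2.2.1 i) ∧ (∀ i, 0 < v.2.2.2.2.2 i)} (fun v => unbalancedOT M ε γ (Pc v) (θ1 v) (θ2 v)) := by
    intro Pc θ1 θ2 hPa hθ1a hθ2a hPp hθ1p hθ2p
    have hrow : ∀ i, AffComb (fun v : MTWV T p => ∑ j, Pc v i j) := fun i =>
      affComb_sum Finset.univ _ fun j _ => hPa i j
    have hcol : ∀ j, AffComb (fun v : MTWV T p => ∑ i, Pc v i j) := fun j =>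
      affComb_sum Finset.univ _ fun i _ => hPa i j
    have hrowp : ∀ i, ∀ v ∈ {v : MTWV T p |
      (∀ t i, 0 < v.1 t i) ∧ (∀ t i, 0 < v.2.1 t i) ∧
      (∀ t i j, 0 < v.2.2.1 t i j) ∧ (∀ t i j, 0 < v.2.2.2.1 t i j) ∧
      (∀ i, 0 < v.2.2.2.2.1 i) ∧ (∀ i, 0 < v.2.2.2.2.2 i)}, 0 < ∑ j, Pc v i j := fun i v hv =>
      Finset.sum_pos (fun j _ => hPp v hv i j) ⟨i, Finset.mem_univ i⟩
    have hcolp : ∀ j, ∀ v ∈ {v : MTWV T p |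
      (∀ t i, 0 < v.1 t i) ∧ (∀ t i, 0 < v.2.1 t i) ∧
      (∀ t i j, 0 < v.2.2.1 t i j) ∧ (∀ t i j, 0 < v.2.2.2.1 t i j) ∧
      (∀ i, 0 < v.2.2.2.2.1 i) ∧ (∀ i, 0 < v.2.2.2.2.2 i)}, 0 < ∑ i, Pc v i j := fun j v hv =>
      Finset.sum_pos (fun i _ => hPp v hv i j) ⟨j, Finset.mem_univ j⟩
    have hT1 : ConvexOn ℝ {v : MTWV T p |
      (∀ t i, 0 < v.1 t i) ∧ (∀ t i, 0 < v.2.1 t i) ∧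
      (∀ t i j, 0 < v.2.2.1 t i j) ∧ (∀ t i j, 0 < v.2.2.2.1 t i j) ∧
      (∀ i, 0 < v.2.2.2.2.1 i) ∧ (∀ i, 0 < v.2.2.2.2.2 i)} (fun v => ∑ i, ∑ j, Pc v i j * M i j) :=
      (affComb_sum Finset.univ _ fun i _ =>
        affComb_sum Finset.univ _ fun j _ => (hPa i j).mul_const (M i j)).convexOn hS
    have hT2 : ConvexOn ℝ {v : MTWV T p |
      (∀ t i, 0 < v.1 t i) ∧ (∀ t i, 0 < v.2.1 t i) ∧
      (∀ t i j, 0 < v.2.2.1 t i j) ∧ (∀ t i j, 0 < v.2.2.2.1 t i j) ∧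
      (∀ i, 0 < v.2.2.2.2.1 i) ∧ (∀ i, 0 < v.2.2.2.2.2 i)}
        (fun v => ε * ∑ i, ∑ j, Pc v i j * (Real.log (Pc v i j) - 1)) :=
      convexOn_mul_fun _ hε.le (convexOn_finset_sum _ hS _ fun i _ =>
        convexOn_finset_sum _ hS _ fun j _ =>
          (hPa i j).entropy hS (fun v hv => hPp v hv i j))
    have hT3 : ConvexOn ℝ {v : MTWV T p |
      (∀ t i, 0 < v.1 t i) ∧ (∀ t i, 0 < v.2.1 t i) ∧
      (∀ t i j, 0 < v.2.2.1 t i j) ∧ (∀ t i j, 0 < v.2.2.2.1 t i j) ∧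
      (∀ i, 0 < v.2.2.2.2.1 i) ∧ (∀ i, 0 < v.2.2.2.2.2 i)}
        (fun v => γ * genKL (fun i => ∑ j, Pc v i j) (θ1 v)) := by
      apply convexOn_mul_fun _ hγ.le
      have hmain : ConvexOn ℝ {v : MTWV T p |
      (∀ t i, 0 < v.1 t i) ∧ (∀ t i, 0 < v.2.1 t i) ∧
      (∀ t i j, 0 < v.2.2.1 t i j) ∧ (∀ t i j, 0 < v.2.2.2.1 t i j) ∧
      (∀ i, 0 < v.2.2.2.2.1 i) ∧ (∀ i, 0 < v.2.2.2.2.2 i)} (fun v => ∑ i,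
          ((∑ j, Pc v i j) * Real.log ((∑ j, Pc v i j) / θ1 v i)
            + (θ1 v i - ∑ j, Pc v i j))) := by
        apply convexOn_finset_sum _ hS
        intro i _
        exact convexOn_add_fun
          ((hrow i).klTerm (hθ1a i) hS (hrowp i) (fun v hv => hθ1p v hv i))
          (((hθ1a i).sub' (hrow i)).convexOn hS)
      have heq : (fun v : MTWV T p => genKL (fun i => ∑ j, Pc v i j) (θ1 v)) =
          fun v => ∑ i, ((∑ j, Pc v i j) * Real.log ((∑ j, Pc v i j) / θ1 v i)
            + (θ1 v i - ∑ j, Pc v i j)) := by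
        funext v
        simp only [genKL]
        exact Finset.sum_congr rfl fun i _ => by ring
      rw [heq]; exact hmain
    have hT4 : ConvexOn ℝ {v : MTWV T p |
      (∀ t i, 0 < v.1 t i) ∧ (∀ t i, 0 < v.2.1 t i) ∧
      (∀ t i j, 0 < v.2.2.1 t i j) ∧ (∀ t i j, 0 < v.2.2.2.1 t i j) ∧
      (∀ i, 0 < v.2.2.2.2.1 i) ∧ (∀ i, 0 < v.2.2.2.2.2 i)}
        (fun v => γ * genKL (fun j => ∑ i, Pc v i j) (θ2 v)) := by
      apply convexOn_mul_fun _ hγ.le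
      have hmain : ConvexOn ℝ {v : MTWV T p |
      (∀ t i, 0 < v.1 t i) ∧ (∀ t i, 0 < v.2.1 t i) ∧
      (∀ t i j, 0 < v.2.2.1 t i j) ∧ (∀ t i j, 0 < v.2.2.2.1 t i j) ∧
      (∀ i, 0 < v.2.2.2.2.1 i) ∧ (∀ i, 0 < v.2.2.2.2.2 i)} (fun v => ∑ j,
          ((∑ i, Pc v i j) * Real.log ((∑ i, Pc v i j) / θ2 v j)
            + (θ2 v j - ∑ i, Pc v i j))) := by
        apply convexOn_finset_sum _ hS
        intro j _
        exact convexOn_add_fun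
          ((hcol j).klTerm (hθ2a j) hS (hcolp j) (fun v hv => hθ2p v hv j))
          (((hθ2a j).sub' (hcol j)).convexOn hS)
      have heq : (fun v : MTWV T p => genKL (fun j => ∑ i, Pc v i j) (θ2 v)) =
          fun v => ∑ j, ((∑ i, Pc v i j) * Real.log ((∑ i, Pc v i j) / θ2 v j)
            + (θ2 v j - ∑ i, Pc v i j)) := by
        funext v
        simp only [genKL]
        exact Finset.sum_congr rfl fun j _ => by ring
      rw [heq]; exact hmain
    exact convexOn_add_fun (convexOn_add_fun (convexOn_add_fun hT1 hT2) hT3) hT4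
  -- assemble the full loss
  show ConvexOn ℝ {v : MTWV T p |
      (∀ t i, 0 < v.1 t i) ∧ (∀ t i, 0 < v.2.1 t i) ∧
      (∀ t i j, 0 < v.2.2.1 t i j) ∧ (∀ t i j, 0 < v.2.2.2.1 t i j) ∧
      (∀ i, 0 < v.2.2.2.2.1 i) ∧ (∀ i, 0 < v.2.2.2.2.2 i)}
      (fun v : MTWV T p => ∑ t, ((1 / (2 * (n : ℝ))) *
        ∑ i, ((X t).mulVec (fun j => v.1 t j - v.2.1 t j) i - Y t i) ^ 2
      + (lam / (T : ℝ)) * ∑ i, (v.1 t i + v.2.1 t i)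
      + (μ / (T : ℝ)) *
          (unbalancedOT M ε γ (v.2.2.1 t) (v.1 t) v.2.2.2.2.1 +
            unbalancedOT M ε γ (v.2.2.2.1 t) (v.2.1 t) v.2.2.2.2.2)))
  apply convexOn_finset_sum _ hS
  intro t _
  refine convexOn_add_fun (convexOn_add_fun ?_ ?_) ?_
  · -- quadratic data-fitting term
    apply convexOn_mul_fun _ (by positivity)
    apply convexOn_finset_sum _ hS
    intro i _
    have h1 : AffComb (fun v : MTWV T p => ∑ j, X t i j * (v.1 t j - v.2.1 t j)) :=
      affComb_sum Finset.univ _ fun j _ => AffComb.const_mul _ ((aθp t j).sub' (aθm t j))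
    have h2 := h1.sub' (affComb_const (E := MTWV T p) (Y t i))
    exact h2.sq hS
  · -- ℓ1 penalty
    exact (AffComb.const_mul (lam / (T : ℝ))
      (affComb_sum Finset.univ _ fun i _ => (aθp t i).add' (aθm t i))).convexOn hS
  · -- OT coupling terms
    apply convexOn_mul_fun _ (div_nonneg hμ (Nat.cast_nonneg T))
    exact convexOn_add_fun
      (hG (fun v => v.2.2.1 t) (fun v => v.1 t) (fun v => v.2.2.2.2.1)
        (fun i j => aP1 t i j) (fun i => aθp t i) (fun i => abp i)
        (fun v hv => hv.2.2.1 t) (fun v hv => hv.1 t) (fun v hv => hv.2.2.2.2.1))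
      (hG (fun v => v.2.2.2.1 t) (fun v => v.2.1 t) (fun v => v.2.2.2.2.2)
        (fun i j => aP2 t i j) (fun i => aθm t i) (fun i => abm i)
        (fun v hv => hv.2.2.2.1 t) (fun v hv => hv.2.1 t) (fun v hv => hv.2.2.2.2.2))
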